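/- The Alternation bound of the bit-reversal sequence on the complete binary tree equals K·log₂K: for K = 2^k, let bitReversal^k ∈ {0,…,K−1}^K be the sequence whose i-th entry is obtained by reversing the k-bit binary representation of i−1, and let T be the complete binary tree of height k with leaves labeled 0,…,K−1. Then Alt_T(bitReversal^k) = K·k. -/

import Mathlib

/-- Number of maximal blocks of equal symbols in a string over `{L,R}` (as `Bool`s). -/
def blocks : List Bool → ℕ
  | [] => 0
  | [_] => 1
  | a :: b :: l => (if a = b then 0 else 1) + blocks (b :: l)

/-- The labeled merge of two finite sets of reals: sort `L ∪ R` increasingly and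
label each element by whether it came from `L` (`true`) or not. -/
noncomputable def mix (L R : Finset ℝ) : List Bool :=
  ((L ∪ R).sort (· ≤ ·)).map (fun x => decide (x ∈ L))

/-- `mixValue L R` is the number of maximal same-origin blocks in the merged sorted sequence. -/
noncomputable def mixValue (L R : Finset ℝ) : ℕ := blocks (mix L R)

/-- A full binary tree with real-labeled leaves. -/
inductive BTree where
  | leaf (x : ℝ) : BTree
  | node (l r : BTree) : BTree

/-- The list of leaf labels, from left to right. -/
def BTree.leaves : BTree → List ℝ
  | .leaf x => [x]
  | .node l r => l.leaves ++ r.leaves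

/-- Wilber's Alternation bound of the point set `P` with respect to reference tree `T`. -/
noncomputable def Alt : BTree → Finset (ℝ × ℝ) → ℕ
  | .leaf _, _ => 0
  | .node l r, P =>
      mixValue ((P.filter (fun p => p.1 ∈ l.leaves)).image Prod.snd)
               ((P.filter (fun p => p.1 ∈ r.leaves)).image Prod.snd)
      + Alt l (P.filter (fun p => p.1 ∈ l.leaves))
      + Alt r (P.filter (fun p => p.1 ∈ r.leaves))

/-- `bitRev k i` reverses the `k`-bit binary representation of `i`. -/
def bitRev : ℕ → ℕ → ℕ
  | 0, _ => 0
  | k + 1, i => (i % 2) * 2 ^ k + bitRev k (i / 2)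

/-- The complete binary tree of height `k` with leaves labeled `off, …, off + 2^k - 1`. -/
def completeTree : ℕ → ℕ → BTree
  | 0, off => .leaf (off : ℝ)
  | k + 1, off => .node (completeTree k off) (completeTree k (off + 2 ^ k))

/-- The geometric view of the bit-reversal sequence on `K = 2^k` keys:
the `i`-th access (for `i ∈ {0,…,K-1}`) is to key `bitRev k i`. -/
noncomputable def bitRevPoints (k : ℕ) : Finset (ℝ × ℝ) :=
  (Finset.range (2 ^ k)).image (fun i => ((bitRev k i : ℝ), (i : ℝ)))



lemma bitRev_lt (k : ℕ) : ∀ i, bitRev k i < 2 ^ k := by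
  induction k with
  | zero => intro i; simp [bitRev]
  | succ k ih =>
      intro i
      have h1 : i % 2 < 2 := Nat.mod_lt _ (by norm_num)
      have h2 := ih (i / 2)
      have : (i % 2) * 2 ^ k ≤ 2 ^ k := by
        interval_cases h : i % 2 <;> omega
      simp only [bitRev, pow_succ]
      omega

lemma bitRev_two_mul (k j : ℕ) : bitRev (k + 1) (2 * j) = bitRev k j := by
  simp [bitRev, Nat.mul_mod_right, Nat.mul_div_cancel_left]

lemma bitRev_two_mul_add_one (k j : ℕ) :
    bitRev (k + 1) (2 * j + 1) = 2 ^ k + bitRev k j := by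
  have h1 : (2 * j + 1) % 2 = 1 := by omega
  have h2 : (2 * j + 1) / 2 = j := by omega
  simp [bitRev, h1, h2]

lemma mem_leaves (k : ℕ) : ∀ (off n : ℕ),
    ((n : ℕ) : ℝ) ∈ (completeTree k off).leaves ↔ off ≤ n ∧ n < off + 2 ^ k := by
  induction k with
  | zero =>
      intro off n
      simp only [completeTree, BTree.leaves, List.mem_singleton, Nat.cast_inj, pow_zero]
      omega
  | succ k ih =>
      intro off n
      simp only [completeTree, BTree.leaves, List.mem_append, ih, pow_succ]
      omega

noncomputable def pts (k off : ℕ) (a b : ℝ) : Finset (ℝ × ℝ) :=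
  (Finset.range (2 ^ k)).image
    (fun j => (((off + bitRev k j : ℕ) : ℝ), a * j + b))

lemma filter_left (k off : ℕ) (a b : ℝ) :
    (pts (k + 1) off a b).filter (fun p => p.1 ∈ (completeTree k off).leaves)
      = pts k off (2 * a) b := by
  ext p
  simp only [pts, Finset.mem_filter, Finset.mem_image, Finset.mem_range]
  constructor
  · rintro ⟨⟨i, hi, rfl⟩, hmem⟩
    rw [mem_leaves] at hmem
    have hb := bitRev_lt k (i / 2)
    have hlt : bitRev (k + 1) i < 2 ^ k := by omega
    have hmod : i % 2 = 0 := by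
      by_contra h
      have h1 : i % 2 = 1 := by omega
      simp only [bitRev, h1, one_mul] at hlt
      omega
    obtain ⟨j, rfl⟩ : ∃ j, i = 2 * j := ⟨i / 2, by omega⟩
    refine ⟨j, by rw [pow_succ] at hi; omega, ?_⟩
    rw [bitRev_two_mul]
    refine Prod.ext rfl ?_
    simp only
    push_cast
    ring
  · rintro ⟨j, hj, rfl⟩
    have hb := bitRev_lt k j
    constructor
    · refine ⟨2 * j, by rw [pow_succ]; omega, ?_⟩
      rw [bitRev_two_mul]
      refine Prod.ext rfl ?_
      simp only
      push_cast
      ring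
    · rw [mem_leaves]; omega

lemma filter_right (k off : ℕ) (a b : ℝ) :
    (pts (k + 1) off a b).filter (fun p => p.1 ∈ (completeTree k (off + 2 ^ k)).leaves)
      = pts k (off + 2 ^ k) (2 * a) (a + b) := by
  ext p
  simp only [pts, Finset.mem_filter, Finset.mem_image, Finset.mem_range]
  constructor
  · rintro ⟨⟨i, hi, rfl⟩, hmem⟩
    rw [mem_leaves] at hmem
    have hb := bitRev_lt k (i / 2)
    have hge : 2 ^ k ≤ bitRev (k + 1) i := by omega
    have hmod : i % 2 = 1 := by
      by_contra h
      have h1 : i % 2 = 0 := by omega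
      simp only [bitRev, h1, zero_mul, zero_add] at hge
      omega
    obtain ⟨j, rfl⟩ : ∃ j, i = 2 * j + 1 := ⟨i / 2, by omega⟩
    refine ⟨j, by rw [pow_succ] at hi; omega, ?_⟩
    rw [bitRev_two_mul_add_one]
    refine Prod.ext ?_ ?_
    · simp only
      norm_cast
      omega
    · simp only
      push_cast
      ring
  · rintro ⟨j, hj, rfl⟩
    have hb := bitRev_lt k j
    constructor
    · refine ⟨2 * j + 1, by rw [pow_succ]; omega, ?_⟩
      rw [bitRev_two_mul_add_one]
      refine Prod.ext ?_ ?_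
      · simp only; norm_cast; omega
      · simp only; push_cast; ring
    · rw [mem_leaves]; omega

lemma blocks_chain' : ∀ (l : List Bool), l.Chain' (· ≠ ·) → blocks l = l.length
  | [], _ => rfl
  | [_], _ => rfl
  | a :: b :: l, h => by
      simp only [List.Chain', List.isChain_cons_cons] at h
      have := blocks_chain' (b :: l) h.2
      simp only [blocks, if_neg h.1, List.length_cons] at *
      omega

lemma blocks_alternating (n : ℕ) :
    blocks ((List.range n).map (fun i => decide (i % 2 = 0))) = n := by
  rw [blocks_chain', List.length_map, List.length_range]
  simp only [List.Chain']; rw [List.isChain_map]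
  cases n with
  | zero => simp
  | succ n =>
      rw [List.isChain_range_succ]
      intro m _
      simp only [ne_eq, decide_eq_decide]
      omega

lemma sort_image_range (f : ℕ → ℝ) (hf : StrictMono f) (n : ℕ) :
    ((Finset.range n).image f).sort (· ≤ ·) = (List.range n).map f := by
  refine (fun hp h1 h2 => List.Perm.eq_of_pairwise' (r := (· ≤ ·)) h1 h2 hp) ?_ ?_ ?_
  · apply Multiset.coe_eq_coe.mp
    rw [Finset.sort_eq]
    rw [Finset.image_val_of_injOn (hf.injective.injOn)]
    rfl
  · exact Finset.pairwise_sort _ _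
  · exact List.Pairwise.map f (fun _ _ h => le_of_lt (hf h)) ((List.pairwise_lt_range (n := n)))

lemma mixValue_eq (k : ℕ) (a b : ℝ) (ha : 0 < a) :
    mixValue ((Finset.range (2 ^ k)).image (fun j : ℕ => 2 * a * j + b))
             ((Finset.range (2 ^ k)).image (fun j : ℕ => 2 * a * j + (a + b)))
      = 2 ^ (k + 1) := by
  have hunion :
      ((Finset.range (2 ^ k)).image (fun j : ℕ => 2 * a * j + b))
        ∪ ((Finset.range (2 ^ k)).image (fun j : ℕ => 2 * a * j + (a + b)))
      = (Finset.range (2 ^ (k + 1))).image (fun i : ℕ => a * i + b) := by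
    ext x
    simp only [Finset.mem_union, Finset.mem_image, Finset.mem_range]
    constructor
    · rintro (⟨j, hj, rfl⟩ | ⟨j, hj, rfl⟩)
      · exact ⟨2 * j, by rw [pow_succ]; omega, by push_cast; ring⟩
      · exact ⟨2 * j + 1, by rw [pow_succ]; omega, by push_cast; ring⟩
    · rintro ⟨i, hi, rfl⟩
      rcases Nat.even_or_odd i with ⟨j, hj⟩ | ⟨j, hj⟩
      · left; exact ⟨j, by omega, by rw [hj]; push_cast; ring⟩
      · right; exact ⟨j, by rw [pow_succ] at hi; omega, by rw [hj]; push_cast; ring⟩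
  have hmono : StrictMono (fun i : ℕ => a * i + b) := by
    intro i j hij
    have h1 : (i : ℝ) < j := by exact_mod_cast hij
    simp only
    nlinarith [mul_pos ha (sub_pos.mpr h1)]
  have hmem : ∀ i : ℕ, i < 2 ^ (k + 1) →
      ((a * (i : ℝ) + b ∈ (Finset.range (2 ^ k)).image (fun j : ℕ => 2 * a * (j : ℝ) + b)) ↔ i % 2 = 0) := by
    intro i hi
    simp only [Finset.mem_image, Finset.mem_range]
    constructor
    · rintro ⟨j, hj, hx⟩
      have h1 : a * (i : ℝ) = a * (2 * j : ℕ) := by push_cast; linarith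
      have h2 : (i : ℝ) = ((2 * j : ℕ) : ℝ) := mul_left_cancel₀ (ne_of_gt ha) h1
      have h3 : i = 2 * j := by exact_mod_cast h2
      omega
    · intro h
      obtain ⟨j, rfl⟩ : ∃ j, i = 2 * j := ⟨i / 2, by omega⟩
      refine ⟨j, by rw [pow_succ] at hi; omega, ?_⟩
      push_cast
      ring
  unfold mixValue mix
  rw [hunion, sort_image_range _ hmono, List.map_map]
  have : List.map ((fun x => decide (x ∈ (Finset.range (2 ^ k)).image (fun j : ℕ => 2 * a * j + b)))
      ∘ (fun i : ℕ => a * i + b)) (List.range (2 ^ (k + 1)))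
      = List.map (fun i => decide (i % 2 = 0)) (List.range (2 ^ (k + 1))) := by
    apply List.map_congr_left
    intro i hi
    rw [List.mem_range] at hi
    simp only [Function.comp_apply, decide_eq_decide]
    exact hmem i hi
  rw [this, blocks_alternating]

lemma snd_image (k off : ℕ) (a b : ℝ) :
    (pts k off a b).image Prod.snd = (Finset.range (2 ^ k)).image (fun j : ℕ => a * j + b) := by
  rw [pts, Finset.image_image]
  rfl

lemma alt_pts (k : ℕ) : ∀ (off : ℕ) (a b : ℝ), 0 < a →
    Alt (completeTree k off) (pts k off a b) = 2 ^ k * k := by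
  induction k with
  | zero => intro off a b _; simp [completeTree, Alt]
  | succ k ih =>
      intro off a b ha
      show Alt (.node (completeTree k off) (completeTree k (off + 2 ^ k))) _ = _
      rw [Alt, filter_left, filter_right, snd_image, snd_image,
        mixValue_eq k a b ha, ih off (2 * a) b (by linarith),
        ih (off + 2 ^ k) (2 * a) (a + b) (by linarith)]
      ring


theorem alt_bitReversal (k : ℕ) :
    Alt (completeTree k 0) (bitRevPoints k) = 2 ^ k * k := by
  have : bitRevPoints k = pts k 0 1 0 := by
    unfold bitRevPoints pts
    apply Finset.image_congr
    intro i _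
    simp
  rw [this]
  exact alt_pts k 0 1 0 one_pos
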